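/- Let A be a finite-dimensional commutative local Frobenius algebra over ℂ with unit e, maximal ideal m, and multiplication-invariant nondegenerate symmetric bilinear form g. Let (x_i), (x̃_i) be g-dual bases of A. Then ∑_i x_i * x̃_i lies in the socle Ann_A(m), and g(e, ∑_i x_i * x̃_i) = dim_ℂ A. Consequently ∑_i x_i * x̃_i equals the unique socle generator H normalized by g(e, H) = dim A. -/

import Mathlib

/-- In a commutative local Frobenius algebra, the element ∑ x_i * x̃_i built from
g-dual bases lies in the socle Ann(m) and pairs with the unit to dim A. -/
theorem socle_element_generates (m : ℕ) (A : Type*) [CommRing A] [Algebra ℂ A]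
    [FiniteDimensional ℂ A] [IsLocalRing A]
    (g : A →ₗ[ℂ] A →ₗ[ℂ] ℂ)
    (hsym : ∀ x y : A, g x y = g y x)
    (hinv : ∀ x y z : A, g (x * y) z = g x (y * z))
    (hnd : ∀ x : A, (∀ y : A, g x y = 0) → x = 0)
    (b : Module.Basis (Fin m) ℂ A) (xt : Fin m → A)
    (hb : ∀ i j, g (b i) (xt j) = if i = j then 1 else 0) :
    (∑ i, b i * xt i) ∈ Submodule.annihilator (IsLocalRing.maximalIdeal A) ∧
      g 1 (∑ i, b i * xt i) = (Module.finrank ℂ A : ℂ) := by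
  -- representation of g v (xt j) as coordinate
  have hrep : ∀ (v : A) (j : Fin m), g v (xt j) = b.repr v j := by
    intro v j
    conv_lhs => rw [← b.sum_repr v]
    simp only [map_sum, map_smul, LinearMap.sum_apply, LinearMap.smul_apply, hb]
    simp [Finset.sum_ite_eq', smul_eq_mul]
  have : IsArtinianRing A := isArtinian_of_tower ℂ inferInstance
  have hMnil : IsNilpotent (IsLocalRing.maximalIdeal A) := by
    rw [← IsLocalRing.jacobson_eq_maximalIdeal ⊥ bot_ne_top]
    exact IsArtinianRing.isNilpotent_jacobson_bot
  -- key: for w in m, ∑ g (w * b i) (xt i) = 0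
  have key : ∀ w ∈ IsLocalRing.maximalIdeal A, (∑ i, g (w * b i) (xt i)) = 0 := by
    intro w hw
    have hwn : IsNilpotent w := by
      obtain ⟨n, hn⟩ := hMnil
      exact ⟨n, by
        have := Ideal.pow_mem_pow hw n
        rw [hn] at this
        simpa using this⟩
    have htr : (∑ i, g (w * b i) (xt i)) =
        LinearMap.trace ℂ A (LinearMap.mulLeft ℂ w) := by
      rw [LinearMap.trace_eq_matrix_trace ℂ b, Matrix.trace]
      refine Finset.sum_congr rfl fun i _ => ?_
      rw [hrep]
      simp [LinearMap.toMatrix_apply, Matrix.diag]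
    rw [htr]
    have hnilf : IsNilpotent (LinearMap.mulLeft ℂ w) := by
      obtain ⟨n, hn⟩ := hwn
      exact ⟨n, by rw [LinearMap.pow_mulLeft, hn, LinearMap.mulLeft_zero_eq_zero]⟩
    have := LinearMap.isNilpotent_trace_of_isNilpotent hnilf
    rwa [isNilpotent_iff_eq_zero] at this
  constructor
  · rw [Submodule.mem_annihilator]
    intro y hy
    rw [smul_eq_mul]
    apply hnd
    intro z
    rw [hinv, map_sum, LinearMap.sum_apply]
    calc ∑ i, g (b i * xt i) (y * z)
        = ∑ i, g ((y * z) * b i) (xt i) := by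
          refine Finset.sum_congr rfl fun i _ => ?_
          rw [hsym, ← hinv]
      _ = 0 := key _ (Ideal.mul_mem_right z _ hy)
  · rw [map_sum]
    have : ∀ i, g 1 (b i * xt i) = 1 := by
      intro i
      have := hinv 1 (b i) (xt i)
      rw [one_mul] at this
      rw [← this, hb]
      simp
    rw [Finset.sum_congr rfl fun i _ => this i, Finset.sum_const, Finset.card_univ,
      Fintype.card_fin, Module.finrank_eq_card_basis b, Fintype.card_fin]
    simp
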